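/- arXiv:math/0409402 — 2 statements merged into one kernel-verified Lean document; each statement's English description precedes it below -/
import Mathlib

section
/- Let π₊ : S³ ∖ H → S¹ be defined by π₊(z₁,z₂) = z₁z₂/|z₁z₂|. Then the map h₊ : S³ ∖ H → S¹ × S¹ × (0,1), h₊(z₁,z₂) = (z₁z₂/|z₁z₂|, z₁/|z₁|, |z₁|), is a homeomorphism satisfying pr₁ ∘ h₊ = π₊ (with pr₁ the projection onto the first factor). In particular π₊ is a trivial fiber bundle projection, and each page π₊⁻¹(u), u ∈ S¹, is homeomorphic to the open annulus S¹ × (0,1). -/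
noncomputable section

/-- The unit 3-sphere in ℂ². -/
def S3 : Set (ℂ × ℂ) := {p | ‖p.1‖ ^ 2 + ‖p.2‖ ^ 2 = 1}

/-- The unit circle in ℂ. -/
def S1 : Set ℂ := {w | ‖w‖ = 1}

/-- The Hopf link `H = {(z₁,z₂) ∈ S³ : z₁z₂ = 0}`. -/
def hopfLink : Set (ℂ × ℂ) := {p ∈ S3 | p.1 * p.2 = 0}

/-- The fibration `π₊(z₁,z₂) = z₁z₂/|z₁z₂|` of the complement of the positive Hopf link. -/
def piPlus (p : ℂ × ℂ) : ℂ := p.1 * p.2 / (‖p.1 * p.2‖ : ℂ)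

namespace HopfAux

lemma mem_facts {p : ℂ × ℂ} (hp : p ∈ S3 \ hopfLink) :
    p.1 ≠ 0 ∧ p.2 ≠ 0 ∧ ‖p.1‖ ^ 2 + ‖p.2‖ ^ 2 = 1 := by
  have h2 : p.1 * p.2 ≠ 0 := fun h => hp.2 ⟨hp.1, h⟩
  exact ⟨fun h => h2 (by simp [h]), fun h => h2 (by simp [h]), hp.1⟩

lemma key2 {p : ℂ × ℂ} (h1 : p.1 ≠ 0) (h2 : p.2 ≠ 0) :
    (‖p.2‖ : ℂ) * ((p.1 * p.2 / (‖p.1 * p.2‖ : ℂ)) *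
      (starRingEnd ℂ) (p.1 / (‖p.1‖ : ℂ))) = p.2 := by
  have ha1 : (‖p.1‖ : ℂ) ≠ 0 := by simp [h1]
  have ha2 : (‖p.2‖ : ℂ) ≠ 0 := by simp [h2]
  have hm : (‖p.1 * p.2‖ : ℂ) = ‖p.1‖ * ‖p.2‖ := by
    push_cast [norm_mul]; ring
  have hc : p.1 * (starRingEnd ℂ) p.1 = (‖p.1‖ : ℂ) ^ 2 := by
    rw [Complex.mul_conj]
    push_cast [Complex.normSq_eq_norm_sq]
    ring
  rw [hm, map_div₀, Complex.conj_ofReal]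
  field_simp
  linear_combination hc

lemma mem_S1_piPlus {p : ℂ × ℂ} (hp : p.1 * p.2 ≠ 0) : piPlus p ∈ S1 := by
  have : ‖p.1 * p.2‖ ≠ 0 := by simpa using hp
  simp [S1, piPlus, map_div₀, Complex.norm_real,
    abs_of_nonneg (norm_nonneg (p.1 * p.2)),
    div_self this, Set.mem_setOf_eq]
  simpa using hp

lemma mem_S1_unit {z : ℂ} (hz : z ≠ 0) : z / (‖z‖ : ℂ) ∈ S1 := by
  have : ‖z‖ ≠ 0 := by simpa using hz
  simp [S1, map_div₀, Complex.norm_real,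
    abs_of_nonneg (norm_nonneg z), div_self this, Set.mem_setOf_eq]

lemma mem_Ioo {p : ℂ × ℂ} (hp : p ∈ S3 \ hopfLink) :
    ‖p.1‖ ∈ Set.Ioo (0:ℝ) 1 := by
  obtain ⟨h1, h2, h3⟩ := mem_facts hp
  have hpos : 0 < ‖p.1‖ := norm_pos_iff.mpr h1
  have hpos2 : 0 < ‖p.2‖ := norm_pos_iff.mpr h2
  constructor
  · exact hpos
  · nlinarith [hpos, hpos2]

-- the inverse map ingredients
lemma bwd_mem {u v : ℂ} {r : ℝ} (hu : u ∈ S1) (hv : v ∈ S1) (hr : r ∈ Set.Ioo (0:ℝ) 1) :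
    (((r:ℂ) * v, (Real.sqrt (1 - r^2) : ℂ) * (u * (starRingEnd ℂ) v)) : ℂ × ℂ) ∈
      S3 \ hopfLink := by
  have hu1 : ‖u‖ = 1 := hu
  have hv1 : ‖v‖ = 1 := hv
  have hrpos := hr.1
  have hr1 := hr.2
  have hs : 0 < Real.sqrt (1 - r^2) := Real.sqrt_pos.2 (by nlinarith)
  have hsq : Real.sqrt (1 - r^2) ^ 2 = 1 - r^2 := Real.sq_sqrt (by nlinarith)
  have ha1 : ‖(r:ℂ) * v‖ = r := by
    simp [map_mul, Complex.norm_real, abs_of_pos hrpos, hv1]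
  have ha2 : ‖(Real.sqrt (1 - r^2) : ℂ) * (u * (starRingEnd ℂ) v)‖ =
      Real.sqrt (1 - r^2) := by
    simp [map_mul, Complex.norm_real, abs_of_pos hs, hu1, hv1]
  constructor
  · show ‖_‖ ^ 2 + ‖_‖ ^ 2 = 1
    rw [ha1, ha2, hsq]; ring
  · intro hmem
    have := hmem.2
    simp only at this
    have h1 : ((r:ℂ) * v) ≠ 0 := by
      intro h; rw [h] at ha1; simp at ha1; linarith [ha1 ▸ hrpos]
    have h2 : ((Real.sqrt (1 - r^2) : ℂ) * (u * (starRingEnd ℂ) v)) ≠ 0 := by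
      intro h; rw [h] at ha2; simp at ha2; linarith [hs, ha2.symm ▸ hs]
    exact (mul_ne_zero h1 h2) this

lemma sqrt_eq {p : ℂ × ℂ} (hp : p ∈ S3 \ hopfLink) :
    Real.sqrt (1 - ‖p.1‖ ^ 2) = ‖p.2‖ := by
  obtain ⟨_, _, h3⟩ := mem_facts hp
  have : 1 - ‖p.1‖ ^ 2 = ‖p.2‖ ^ 2 := by linarith
  rw [this, Real.sqrt_sq (norm_nonneg p.2)]

-- right inverse computations
lemma fwd_bwd {u v : ℂ} {r : ℝ} (hu : u ∈ S1) (hv : v ∈ S1) (hr : r ∈ Set.Ioo (0:ℝ) 1) :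
    piPlus ((r:ℂ) * v, (Real.sqrt (1 - r^2) : ℂ) * (u * (starRingEnd ℂ) v)) = u ∧
    ((r:ℂ) * v) / (‖(r:ℂ) * v‖ : ℂ) = v ∧
    ‖(r:ℂ) * v‖ = r := by
  have hu1 : ‖u‖ = 1 := hu
  have hv1 : ‖v‖ = 1 := hv
  have hrpos := hr.1
  have hs : 0 < Real.sqrt (1 - r^2) := Real.sqrt_pos.2 (by nlinarith [hr.2])
  have hvv : v * (starRingEnd ℂ) v = 1 := by
    rw [Complex.mul_conj]
    norm_cast
    rw [Complex.normSq_eq_norm_sq, hv1]; norm_num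
  have ha1 : ‖(r:ℂ) * v‖ = r := by
    simp [map_mul, Complex.norm_real, abs_of_pos hrpos, hv1]
  refine ⟨?_, ?_, ha1⟩
  · unfold piPlus
    have hnum : ((r:ℂ) * v) * ((Real.sqrt (1 - r^2) : ℂ) * (u * (starRingEnd ℂ) v)) =
        (r : ℂ) * (Real.sqrt (1 - r^2) : ℂ) * u := by
      linear_combination ((r:ℂ) * (Real.sqrt (1 - r^2) : ℂ) * u) * hvv
    rw [hnum]
    have habs : ‖(r:ℂ) * (Real.sqrt (1 - r^2) : ℂ) * u‖ =
        r * Real.sqrt (1 - r^2) := by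
      simp [map_mul, Complex.norm_real, abs_of_pos hrpos, abs_of_pos hs, hu1]
    rw [habs]
    have hne : ((r * Real.sqrt (1 - r^2) : ℝ) : ℂ) ≠ 0 := by
      norm_cast
      positivity
    push_cast at hne ⊢
    field_simp
    exact mul_div_cancel_left₀ u hne
  · rw [ha1]
    have : (r : ℂ) ≠ 0 := by norm_cast; linarith
    field_simp

end HopfAux

namespace HopfAux

lemma nz {p : ℂ × ℂ} (hp : p ∈ S3 \ hopfLink) : p.1 * p.2 ≠ 0 :=
  mul_ne_zero (mem_facts hp).1 (mem_facts hp).2.1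

/-- Forward map. -/
def fwdFun (p : (S3 \ hopfLink : Set (ℂ × ℂ))) : ↥S1 × ↥S1 × ↥(Set.Ioo (0:ℝ) 1) :=
  (⟨piPlus p.val, mem_S1_piPlus (nz p.2)⟩,
   ⟨p.val.1 / (‖p.val.1‖ : ℂ), mem_S1_unit (mem_facts p.2).1⟩,
   ⟨‖p.val.1‖, mem_Ioo p.2⟩)

/-- Backward map. -/
def bwdFun (q : ↥S1 × ↥S1 × ↥(Set.Ioo (0:ℝ) 1)) : (S3 \ hopfLink : Set (ℂ × ℂ)) :=
  ⟨(((q.2.2 : ℝ) : ℂ) * (q.2.1 : ℂ),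
    (Real.sqrt (1 - (q.2.2 : ℝ)^2) : ℂ) * ((q.1 : ℂ) * (starRingEnd ℂ) (q.2.1 : ℂ))),
   bwd_mem q.1.2 q.2.1.2 q.2.2.2⟩

lemma left_inv' (p : (S3 \ hopfLink : Set (ℂ × ℂ))) : bwdFun (fwdFun p) = p := by
  obtain ⟨h1, h2, h3⟩ := mem_facts p.2
  apply Subtype.ext
  apply Prod.ext
  · show (‖p.val.1‖ : ℂ) * (p.val.1 / (‖p.val.1‖ : ℂ)) = p.val.1
    have : (‖p.val.1‖ : ℂ) ≠ 0 := by simp [h1]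
    field_simp
  · show (Real.sqrt (1 - ‖p.val.1‖ ^ 2) : ℂ) *
      (piPlus p.val * (starRingEnd ℂ) (p.val.1 / (‖p.val.1‖ : ℂ))) = p.val.2
    rw [sqrt_eq p.2]
    exact key2 h1 h2

lemma right_inv' (q : ↥S1 × ↥S1 × ↥(Set.Ioo (0:ℝ) 1)) : fwdFun (bwdFun q) = q := by
  obtain ⟨h1, h2, h3⟩ := fwd_bwd q.1.2 q.2.1.2 q.2.2.2
  refine Prod.ext (Subtype.ext ?_) (Prod.ext (Subtype.ext ?_) (Subtype.ext ?_))
  · exact h1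
  · exact h2
  · exact h3

lemma cont_fwd : Continuous fwdFun := by
  have h1 : Continuous fun p : (S3 \ hopfLink : Set (ℂ × ℂ)) => p.val.1 :=
    continuous_subtype_val.fst
  have h2 : Continuous fun p : (S3 \ hopfLink : Set (ℂ × ℂ)) => p.val.2 :=
    continuous_subtype_val.snd
  have habs1 : Continuous fun p : (S3 \ hopfLink : Set (ℂ × ℂ)) =>
      ((‖p.val.1‖ : ℝ) : ℂ) :=
    Complex.continuous_ofReal.comp (continuous_norm.comp h1)
  have habs12 : Continuous fun p : (S3 \ hopfLink : Set (ℂ × ℂ)) =>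
      ((‖p.val.1 * p.val.2‖ : ℝ) : ℂ) :=
    Complex.continuous_ofReal.comp (continuous_norm.comp (h1.mul h2))
  refine Continuous.prodMk (Continuous.subtype_mk ?_ _)
    (Continuous.prodMk (Continuous.subtype_mk ?_ _) (Continuous.subtype_mk ?_ _))
  · exact Continuous.div (h1.mul h2) habs12
      (fun p => by simpa using nz p.2)
  · exact Continuous.div h1 habs1
      (fun p => by simpa using (mem_facts p.2).1)
  · exact continuous_norm.comp h1

lemma cont_bwd : Continuous bwdFun := by
  apply Continuous.subtype_mk
  have hu : Continuous fun q : ↥S1 × ↥S1 × ↥(Set.Ioo (0:ℝ) 1) => (q.1 : ℂ) :=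
    continuous_subtype_val.comp continuous_fst
  have hv : Continuous fun q : ↥S1 × ↥S1 × ↥(Set.Ioo (0:ℝ) 1) => (q.2.1 : ℂ) :=
    continuous_subtype_val.comp (continuous_fst.comp continuous_snd)
  have hr : Continuous fun q : ↥S1 × ↥S1 × ↥(Set.Ioo (0:ℝ) 1) => (q.2.2 : ℝ) :=
    continuous_subtype_val.comp (continuous_snd.comp continuous_snd)
  exact Continuous.prodMk ((Complex.continuous_ofReal.comp hr).mul hv)
    ((Complex.continuous_ofReal.comp (Real.continuous_sqrt.comp
      (continuous_const.sub (hr.pow 2)))).mul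
      (hu.mul (Complex.continuous_conj.comp hv)))

/-- The full homeomorphism. -/
def theHomeo : (S3 \ hopfLink : Set (ℂ × ℂ)) ≃ₜ (↥S1 × ↥S1 × ↥(Set.Ioo (0:ℝ) 1)) where
  toFun := fwdFun
  invFun := bwdFun
  left_inv := left_inv'
  right_inv := right_inv'
  continuous_toFun := cont_fwd
  continuous_invFun := cont_bwd

end HopfAux

namespace HopfAux

variable (u : ℂ)

/-- The page of the open book. -/
def page : Set (ℂ × ℂ) := {p : ℂ × ℂ | p ∈ S3 \ hopfLink ∧ piPlus p = u}

def pageFwd (p : ↥(page u)) : ↥S1 × ↥(Set.Ioo (0:ℝ) 1) :=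
  (⟨p.val.1 / (‖p.val.1‖ : ℂ), mem_S1_unit (mem_facts p.2.1).1⟩,
   ⟨‖p.val.1‖, mem_Ioo p.2.1⟩)

def pageBwd (hu : u ∈ S1) (q : ↥S1 × ↥(Set.Ioo (0:ℝ) 1)) : ↥(page u) :=
  ⟨(((q.2 : ℝ) : ℂ) * (q.1 : ℂ),
    (Real.sqrt (1 - (q.2 : ℝ)^2) : ℂ) * (u * (starRingEnd ℂ) (q.1 : ℂ))),
   ⟨bwd_mem hu q.1.2 q.2.2, (fwd_bwd hu q.1.2 q.2.2).1⟩⟩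

def pageHomeo (hu : u ∈ S1) : ↥(page u) ≃ₜ (↥S1 × ↥(Set.Ioo (0:ℝ) 1)) where
  toFun := pageFwd u
  invFun := pageBwd u hu
  left_inv := by
    intro p
    obtain ⟨h1, h2, h3⟩ := mem_facts p.2.1
    apply Subtype.ext
    apply Prod.ext
    · show (‖p.val.1‖ : ℂ) * (p.val.1 / (‖p.val.1‖ : ℂ)) = p.val.1
      have : (‖p.val.1‖ : ℂ) ≠ 0 := by simp [h1]
      field_simp
    · show (Real.sqrt (1 - ‖p.val.1‖ ^ 2) : ℂ) *
        (u * (starRingEnd ℂ) (p.val.1 / (‖p.val.1‖ : ℂ))) = p.val.2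
      have key : ∀ z : ℂ × ℂ, z ∈ S3 \ hopfLink → piPlus z = u →
          (Real.sqrt (1 - ‖z.1‖ ^ 2) : ℂ) *
            (u * (starRingEnd ℂ) (z.1 / (‖z.1‖ : ℂ))) = z.2 := by
        intro z hz hpz
        rw [← hpz, sqrt_eq hz]
        exact key2 (mem_facts hz).1 (mem_facts hz).2.1
      exact key p.val p.2.1 p.2.2
  right_inv := by
    intro q
    obtain ⟨_, h2, h3⟩ := fwd_bwd hu q.1.2 q.2.2
    exact Prod.ext (Subtype.ext h2) (Subtype.ext h3)
  continuous_toFun := by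
    have h1 : Continuous fun p : ↥(page u) => p.val.1 := continuous_subtype_val.fst
    have habs1 : Continuous fun p : ↥(page u) => ((‖p.val.1‖ : ℝ) : ℂ) :=
      Complex.continuous_ofReal.comp (continuous_norm.comp h1)
    refine Continuous.prodMk (Continuous.subtype_mk ?_ _) (Continuous.subtype_mk ?_ _)
    · exact Continuous.div h1 habs1 (fun p => by simpa using (mem_facts p.2.1).1)
    · exact continuous_norm.comp h1
  continuous_invFun := by
    apply Continuous.subtype_mk
    have hv : Continuous fun q : ↥S1 × ↥(Set.Ioo (0:ℝ) 1) => (q.1 : ℂ) :=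
      continuous_subtype_val.comp continuous_fst
    have hr : Continuous fun q : ↥S1 × ↥(Set.Ioo (0:ℝ) 1) => (q.2 : ℝ) :=
      continuous_subtype_val.comp continuous_snd
    exact Continuous.prodMk ((Complex.continuous_ofReal.comp hr).mul hv)
      ((Complex.continuous_ofReal.comp (Real.continuous_sqrt.comp
        (continuous_const.sub (hr.pow 2)))).mul
        (continuous_const.mul (Complex.continuous_conj.comp hv)))

end HopfAux


/-- The map `h₊(z₁,z₂) = (z₁z₂/|z₁z₂|, z₁/|z₁|, |z₁|)` is a homeomorphism from
`S³ ∖ H` to `S¹ × S¹ × (0,1)` whose first component is `π₊`; in particular `π₊` is a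
trivial fiber bundle projection and each page `π₊⁻¹(u)` is homeomorphic to the open
annulus `S¹ × (0,1)`. -/
theorem open_book_positive_hopf_trivial_annulus_bundle :
    (∃ h : (S3 \ hopfLink : Set (ℂ × ℂ)) ≃ₜ (↥S1 × ↥S1 × ↥(Set.Ioo (0:ℝ) 1)),
      ∀ p : (S3 \ hopfLink : Set (ℂ × ℂ)),
        ((h p).1 : ℂ) = piPlus p.val ∧
        ((h p).2.1 : ℂ) = p.val.1 / (‖p.val.1‖ : ℂ) ∧
        ((h p).2.2 : ℝ) = ‖p.val.1‖) ∧
    ∀ u : ℂ, u ∈ S1 →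
      Nonempty
        ((({p : ℂ × ℂ | p ∈ S3 \ hopfLink ∧ piPlus p = u}) : Set (ℂ × ℂ)) ≃ₜ
          (↥S1 × ↥(Set.Ioo (0:ℝ) 1))) := by
  exact ⟨⟨HopfAux.theHomeo, fun p => ⟨rfl, rfl, rfl⟩⟩,
    fun u hu => ⟨HopfAux.pageHomeo u hu⟩⟩
end
end

section
/- Let π₋ : S³ ∖ H → S¹ be defined by π₋(z₁,z₂) = z₁·conj(z₂)/|z₁z₂|. Then the map h₋ : S³ ∖ H → S¹ × S¹ × (0,1), h₋(z₁,z₂) = (z₁·conj(z₂)/|z₁z₂|, z₁/|z₁|, |z₁|), is a homeomorphism satisfying pr₁ ∘ h₋ = π₋ (with pr₁ the projection onto the first factor). In particular π₋ is a trivial fiber bundle projection, and each page π₋⁻¹(u), u ∈ S¹, is homeomorphic to the open annulus S¹ × (0,1). -/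
noncomputable section

/-- The fibration `π₋(z₁,z₂) = z₁·conj(z₂)/|z₁z₂|` of the complement of the negative
Hopf link. -/
def piMinus (p : ℂ × ℂ) : ℂ :=
  p.1 * (starRingEnd ℂ) p.2 / (‖p.1 * p.2‖ : ℂ)

open Set Complex

lemma aux_ne {p : ℂ × ℂ} (hp : p ∈ S3 \ hopfLink) : p.1 ≠ 0 ∧ p.2 ≠ 0 := by
  obtain ⟨h1, h2⟩ := hp
  have hmul : p.1 * p.2 ≠ 0 := fun h => h2 ⟨h1, h⟩
  exact mul_ne_zero_iff.mp hmul

lemma aux_sum {p : ℂ × ℂ} (hp : p ∈ S3 \ hopfLink) :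
    ‖p.1‖ ^ 2 + ‖p.2‖ ^ 2 = 1 := hp.1

lemma aux_abs1 {p : ℂ × ℂ} (hp : p ∈ S3 \ hopfLink) :
    ‖p.1‖ ∈ Set.Ioo (0:ℝ) 1 := by
  obtain ⟨h1, h2⟩ := aux_ne hp
  have hs := aux_sum hp
  have hp1 : 0 < ‖p.1‖ := norm_pos_iff.mpr h1
  have hp2 : 0 < ‖p.2‖ := norm_pos_iff.mpr h2
  constructor
  · exact hp1
  · nlinarith

lemma aux_abs2 {p : ℂ × ℂ} (hp : p ∈ S3 \ hopfLink) :
    ‖p.2‖ = Real.sqrt (1 - ‖p.1‖ ^ 2) := by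
  have hs := aux_sum hp
  have : 1 - ‖p.1‖ ^ 2 = ‖p.2‖ ^ 2 := by linarith
  rw [this, Real.sqrt_sq (norm_nonneg _)]

lemma aux_pi_mem {p : ℂ × ℂ} (hp : p ∈ S3 \ hopfLink) : piMinus p ∈ S1 := by
  obtain ⟨h1, h2⟩ := aux_ne hp
  have habs : ‖p.1 * p.2‖ ≠ 0 := by
    simp [norm_mul, h1, h2]
  show ‖_‖ = 1
  rw [piMinus, norm_div, norm_mul, Complex.norm_conj, Complex.norm_real, Real.norm_eq_abs,
    _root_.abs_of_nonneg (norm_nonneg _), norm_mul]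
  rw [norm_mul] at habs
  exact div_self habs

lemma aux_phase_mem {z : ℂ} (hz : z ≠ 0) : z / (‖z‖ : ℂ) ∈ S1 := by
  show ‖_‖ = 1
  rw [norm_div, Complex.norm_real, Real.norm_eq_abs, _root_.abs_of_nonneg (norm_nonneg _)]
  exact div_self (norm_ne_zero_iff.mpr hz)

/-- The backward map's value. -/
def bwdVal (u v : ℂ) (r : ℝ) : ℂ × ℂ :=
  ((r : ℂ) * v, (Real.sqrt (1 - r ^ 2) : ℂ) * ((starRingEnd ℂ) u * v))

lemma bwd_mem {u v : ℂ} {r : ℝ} (hu : u ∈ S1) (hv : v ∈ S1) (hr : r ∈ Set.Ioo (0:ℝ) 1) :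
    bwdVal u v r ∈ S3 \ hopfLink := by
  have hu' : ‖u‖ = 1 := hu
  have hv' : ‖v‖ = 1 := hv
  have hr0 : (0:ℝ) < r := hr.1
  have hs0 : 0 < 1 - r ^ 2 := by nlinarith [hr.2]
  have hsq : Real.sqrt (1 - r ^ 2) ^ 2 = 1 - r ^ 2 := Real.sq_sqrt hs0.le
  have hsum : ‖(r : ℂ) * v‖ ^ 2 +
      ‖(Real.sqrt (1 - r ^ 2) : ℂ) * ((starRingEnd ℂ) u * v)‖ ^ 2 = 1 := by
    simp only [map_mul, norm_mul, Complex.norm_conj, hu', hv', Complex.norm_real, Real.norm_eq_abs,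
      _root_.abs_of_pos hr0, _root_.abs_of_nonneg (Real.sqrt_nonneg _), mul_one]
    linarith [hsq]
  refine ⟨hsum, fun h => ?_⟩
  have hne : ((r : ℂ) * v) * ((Real.sqrt (1 - r ^ 2) : ℂ) * ((starRingEnd ℂ) u * v)) ≠ 0 := by
    have hv0 : v ≠ 0 := fun h0 => by simp [h0] at hv'
    have hu0 : u ≠ 0 := fun h0 => by simp [h0] at hu'
    apply mul_ne_zero
    · exact mul_ne_zero (by exact_mod_cast hr0.ne') hv0
    · exact mul_ne_zero (by exact_mod_cast (Real.sqrt_pos.mpr hs0).ne')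
        (mul_ne_zero ((map_ne_zero _).mpr hu0) hv0)
  exact hne h.2

lemma bwd_abs {v : ℂ} {r : ℝ} (hv : v ∈ S1) (hr0 : 0 < r) :
    ‖(r : ℂ) * v‖ = r := by
  have hv' : ‖v‖ = 1 := hv
  rw [norm_mul, hv', Complex.norm_real, Real.norm_eq_abs, abs_of_pos hr0, mul_one]

lemma bwd_phase {v : ℂ} {r : ℝ} (hv : v ∈ S1) (hr0 : 0 < r) :
    ((r : ℂ) * v) / (‖(r : ℂ) * v‖ : ℂ) = v := by
  rw [bwd_abs hv hr0]
  have : (r : ℂ) ≠ 0 := by exact_mod_cast hr0.ne'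
  field_simp

lemma bwd_pi {u v : ℂ} {r : ℝ} (hu : u ∈ S1) (hv : v ∈ S1) (hr : r ∈ Set.Ioo (0:ℝ) 1) :
    piMinus (bwdVal u v r) = u := by
  have hu' : ‖u‖ = 1 := hu
  have hv' : ‖v‖ = 1 := hv
  have hr0 : (0:ℝ) < r := hr.1
  have hs0 : 0 < Real.sqrt (1 - r ^ 2) := Real.sqrt_pos.mpr (by nlinarith [hr.2])
  have hvv : v * (starRingEnd ℂ) v = 1 := by
    rw [Complex.mul_conj]
    rw [Complex.normSq_eq_norm_sq, hv']
    norm_num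
  have hnum : ((r : ℂ) * v) * (starRingEnd ℂ) ((Real.sqrt (1 - r ^ 2) : ℂ) *
      ((starRingEnd ℂ) u * v)) = ((r * Real.sqrt (1 - r ^ 2) : ℝ) : ℂ) * u := by
    simp only [map_mul, Complex.conj_conj, Complex.conj_ofReal]
    push_cast
    calc (r : ℂ) * v * ((Real.sqrt (1 - r ^ 2) : ℂ) * (u * (starRingEnd ℂ) v))
        = (r : ℂ) * (Real.sqrt (1 - r ^ 2) : ℂ) * u * (v * (starRingEnd ℂ) v) := by ring
      _ = (r : ℂ) * (Real.sqrt (1 - r ^ 2) : ℂ) * u := by rw [hvv, mul_one]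
      _ = _ := by ring
  have hden : ‖((r : ℂ) * v) * ((Real.sqrt (1 - r ^ 2) : ℂ) *
      ((starRingEnd ℂ) u * v))‖ = r * Real.sqrt (1 - r ^ 2) := by
    simp only [map_mul, norm_mul, Complex.norm_conj, hu', hv', Complex.norm_real, Real.norm_eq_abs,
      _root_.abs_of_pos hr0, _root_.abs_of_pos hs0, mul_one]
  have hrs : ((r * Real.sqrt (1 - r ^ 2) : ℝ) : ℂ) ≠ 0 := by
    exact_mod_cast (mul_pos hr0 hs0).ne'
  rw [piMinus, bwdVal]
  dsimp only
  rw [hnum, hden]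
  exact mul_div_cancel_left₀ u hrs

lemma recon {p : ℂ × ℂ} (hp : p ∈ S3 \ hopfLink) :
    bwdVal (piMinus p) (p.1 / (‖p.1‖ : ℂ)) (‖p.1‖) = p := by
  obtain ⟨h1, h2⟩ := aux_ne hp
  have ha1 : (0:ℝ) < ‖p.1‖ := norm_pos_iff.mpr h1
  have ha2 : (0:ℝ) < ‖p.2‖ := norm_pos_iff.mpr h2
  have hc1 : ((‖p.1‖ : ℂ)) ≠ 0 := by exact_mod_cast ha1.ne'
  have hc2 : ((‖p.2‖ : ℂ)) ≠ 0 := by exact_mod_cast ha2.ne'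
  have hsqrt : Real.sqrt (1 - ‖p.1‖ ^ 2) = ‖p.2‖ := (aux_abs2 hp).symm
  have hconj : (starRingEnd ℂ) (piMinus p) =
      ((starRingEnd ℂ) p.1 * p.2) / (‖p.1 * p.2‖ : ℂ) := by
    rw [piMinus, map_div₀, map_mul, Complex.conj_conj, Complex.conj_ofReal]
  have habs : ((‖p.1 * p.2‖ : ℝ) : ℂ) =
      (‖p.1‖ : ℂ) * (‖p.2‖ : ℂ) := by
    rw [norm_mul]; push_cast; ring
  have hmc : (starRingEnd ℂ) p.1 * p.1 = ((‖p.1‖ : ℂ)) ^ 2 := by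
    rw [mul_comm, Complex.mul_conj, Complex.normSq_eq_norm_sq]; push_cast; ring
  refine Prod.ext ?_ ?_
  · show (‖p.1‖ : ℂ) * (p.1 / (‖p.1‖ : ℂ)) = p.1
    field_simp
  · show ((Real.sqrt (1 - ‖p.1‖ ^ 2) : ℝ) : ℂ) *
        ((starRingEnd ℂ) (piMinus p) * (p.1 / (‖p.1‖ : ℂ))) = p.2
    rw [hsqrt, hconj, habs]
    field_simp
    linear_combination hmc

/-- Forward map of the big homeomorphism. -/
def bigFwd (p : (S3 \ hopfLink : Set (ℂ × ℂ))) : ↥S1 × ↥S1 × ↥(Set.Ioo (0:ℝ) 1) :=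
  ⟨⟨piMinus p.val, aux_pi_mem p.2⟩,
   ⟨p.val.1 / (‖p.val.1‖ : ℂ), aux_phase_mem (aux_ne p.2).1⟩,
   ⟨‖p.val.1‖, aux_abs1 p.2⟩⟩

/-- Backward map of the big homeomorphism. -/
def bigBwd (q : ↥S1 × ↥S1 × ↥(Set.Ioo (0:ℝ) 1)) : (S3 \ hopfLink : Set (ℂ × ℂ)) :=
  ⟨bwdVal q.1.val q.2.1.val q.2.2.val, bwd_mem q.1.2 q.2.1.2 q.2.2.2⟩

lemma big_left_inv : Function.LeftInverse bigBwd bigFwd := by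
  intro p
  apply Subtype.ext
  exact recon p.2

lemma big_right_inv : Function.RightInverse bigBwd bigFwd := by
  rintro ⟨⟨u, hu⟩, ⟨v, hv⟩, ⟨r, hr⟩⟩
  refine Prod.ext (Subtype.ext ?_) (Prod.ext (Subtype.ext ?_) (Subtype.ext ?_))
  · exact bwd_pi hu hv hr
  · exact bwd_phase hv hr.1
  · exact bwd_abs hv hr.1

lemma cont_piMinus : Continuous fun p : (S3 \ hopfLink : Set (ℂ × ℂ)) => piMinus p.val := by
  simp only [piMinus]
  apply Continuous.div
  · exact (continuous_fst.comp continuous_subtype_val).mul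
      (Complex.continuous_conj.comp (continuous_snd.comp continuous_subtype_val))
  · exact Complex.continuous_ofReal.comp (continuous_norm.comp
      ((continuous_fst.comp continuous_subtype_val).mul
        (continuous_snd.comp continuous_subtype_val)))
  · intro p
    obtain ⟨h1, h2⟩ := aux_ne p.2
    simp [norm_mul, h1, h2, norm_ne_zero_iff]

lemma cont_absFst {s : Set (ℂ × ℂ)} : Continuous fun p : s => ‖p.val.1‖ :=
  continuous_norm.comp (continuous_fst.comp continuous_subtype_val)

lemma cont_phase' {s : Set (ℂ × ℂ)} (h : ∀ p : s, p.val.1 ≠ 0) : Continuous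
    fun p : s => p.val.1 / (‖p.val.1‖ : ℂ) := by
  apply Continuous.div
  · exact continuous_fst.comp continuous_subtype_val
  · exact Complex.continuous_ofReal.comp cont_absFst
  · intro p
    exact_mod_cast (norm_pos_iff.mpr (h p)).ne'

lemma cont_bigFwd : Continuous bigFwd := by
  exact Continuous.prodMk (Continuous.subtype_mk cont_piMinus _)
    (Continuous.prodMk
      (Continuous.subtype_mk (cont_phase' fun p => (aux_ne p.2).1) _)
      (Continuous.subtype_mk cont_absFst _))

lemma cont_bwdVal {α : Type*} [TopologicalSpace α] {fu fv : α → ℂ} {fr : α → ℝ}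
    (hu : Continuous fu) (hv : Continuous fv) (hr : Continuous fr) :
    Continuous fun a => bwdVal (fu a) (fv a) (fr a) := by
  apply Continuous.prodMk
  · exact (Complex.continuous_ofReal.comp hr).mul hv
  · exact ((Complex.continuous_ofReal.comp (Real.continuous_sqrt.comp
      (continuous_const.sub (hr.pow 2))))).mul ((Complex.continuous_conj.comp hu).mul hv)

lemma cont_bigBwd : Continuous bigBwd := by
  apply Continuous.subtype_mk
  exact cont_bwdVal (continuous_subtype_val.comp continuous_fst)
    (continuous_subtype_val.comp (continuous_fst.comp continuous_snd))
    (continuous_subtype_val.comp (continuous_snd.comp continuous_snd))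

/-- The big homeomorphism. -/
def bigHomeo : (S3 \ hopfLink : Set (ℂ × ℂ)) ≃ₜ (↥S1 × ↥S1 × ↥(Set.Ioo (0:ℝ) 1)) where
  toFun := bigFwd
  invFun := bigBwd
  left_inv := big_left_inv
  right_inv := big_right_inv
  continuous_toFun := cont_bigFwd
  continuous_invFun := cont_bigBwd

section Fiber

variable {u : ℂ} (hu : u ∈ S1)

/-- Forward map on a fiber. -/
def fibFwd (p : ({p : ℂ × ℂ | p ∈ S3 \ hopfLink ∧ piMinus p = u} : Set (ℂ × ℂ))) :
    ↥S1 × ↥(Set.Ioo (0:ℝ) 1) :=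
  ⟨⟨p.val.1 / (‖p.val.1‖ : ℂ), aux_phase_mem (aux_ne p.2.1).1⟩,
   ⟨‖p.val.1‖, aux_abs1 p.2.1⟩⟩

/-- Backward map on a fiber. -/
def fibBwd (q : ↥S1 × ↥(Set.Ioo (0:ℝ) 1)) :
    ({p : ℂ × ℂ | p ∈ S3 \ hopfLink ∧ piMinus p = u} : Set (ℂ × ℂ)) :=
  ⟨bwdVal u q.1.val q.2.val, bwd_mem hu q.1.2 q.2.2, bwd_pi hu q.1.2 q.2.2⟩

/-- The fiber homeomorphism. -/
def fibHomeo : ({p : ℂ × ℂ | p ∈ S3 \ hopfLink ∧ piMinus p = u} : Set (ℂ × ℂ)) ≃ₜ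
    (↥S1 × ↥(Set.Ioo (0:ℝ) 1)) where
  toFun := fibFwd
  invFun := fibBwd hu
  left_inv := by
    rintro ⟨p, hp, hpi⟩
    apply Subtype.ext
    show bwdVal u (p.1 / (‖p.1‖ : ℂ)) (‖p.1‖) = p
    rw [← hpi]
    exact recon hp
  right_inv := by
    rintro ⟨⟨v, hv⟩, ⟨r, hr⟩⟩
    refine Prod.ext (Subtype.ext ?_) (Subtype.ext ?_)
    · exact bwd_phase hv hr.1
    · exact bwd_abs hv hr.1
  continuous_toFun :=
    Continuous.prodMk
      (Continuous.subtype_mk (cont_phase' fun p => (aux_ne p.2.1).1) _)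
      (Continuous.subtype_mk cont_absFst _)
  continuous_invFun := by
    apply Continuous.subtype_mk
    exact cont_bwdVal continuous_const
      (continuous_subtype_val.comp continuous_fst)
      (continuous_subtype_val.comp continuous_snd)

end Fiber

/-- The map `h₋(z₁,z₂) = (z₁·conj(z₂)/|z₁z₂|, z₁/|z₁|, |z₁|)` is a homeomorphism from
`S³ ∖ H` to `S¹ × S¹ × (0,1)` whose first component is `π₋`; in particular `π₋` is a
trivial fiber bundle projection and each page `π₋⁻¹(u)` is homeomorphic to the open
annulus `S¹ × (0,1)`. -/
theorem open_book_negative_hopf_trivial_annulus_bundle :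
    (∃ h : (S3 \ hopfLink : Set (ℂ × ℂ)) ≃ₜ (↥S1 × ↥S1 × ↥(Set.Ioo (0:ℝ) 1)),
      ∀ p : (S3 \ hopfLink : Set (ℂ × ℂ)),
        ((h p).1 : ℂ) = piMinus p.val ∧
        ((h p).2.1 : ℂ) = p.val.1 / (‖p.val.1‖ : ℂ) ∧
        ((h p).2.2 : ℝ) = ‖p.val.1‖) ∧
    ∀ u : ℂ, u ∈ S1 →
      Nonempty
        ((({p : ℂ × ℂ | p ∈ S3 \ hopfLink ∧ piMinus p = u}) : Set (ℂ × ℂ)) ≃ₜ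
          (↥S1 × ↥(Set.Ioo (0:ℝ) 1))) := by
  exact ⟨⟨bigHomeo, fun p => ⟨rfl, rfl, rfl⟩⟩, fun u hu => ⟨fibHomeo hu⟩⟩
end
end
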